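/- Let X, Y be Bernoulli random variables with marginals p_x, p_y ∈ (0,1) and joint distribution such that all four probabilities p(i,j) are positive, and let ε = P(X=1,Y=1) − p_x p_y. If |ε| ≤ (1/2)·min over i,j of p(i)p(j), then |I(X,Y) − ε²/(2(p_x − p_x²)(p_y − p_y²))| ≤ K·|ε|³ for some constant K depending only on p_x and p_y (explicitly one may take K = 16/(min_{i,j} p(i)p(j))²). -/

import Mathlib

lemma log_lin_bound (t : ℝ) (ht : -(1:ℝ)/2 ≤ t) : |Real.log (1+t) - t| ≤ 2 * t^2 := by
  have h1t : (0:ℝ) < 1 + t := by linarith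
  have hub : Real.log (1+t) ≤ t := by
    have := Real.log_le_sub_one_of_pos h1t; linarith
  have hlb : t - Real.log (1+t) ≤ t^2 / (1+t) := by
    have h2 : Real.log ((1+t)⁻¹) ≤ (1+t)⁻¹ - 1 := Real.log_le_sub_one_of_pos (by positivity)
    rw [Real.log_inv] at h2
    have h3 : (1+t)⁻¹ - 1 = -(t / (1+t)) := by field_simp; ring
    rw [h3] at h2
    have h4 : t - t/(1+t) = t^2/(1+t) := by field_simp; ring
    have h5 : t - Real.log (1+t) ≤ t - t/(1+t) := by linarith
    linarith [h4, h5]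
  have hq : t^2 / (1+t) ≤ 2 * t^2 := by
    rw [div_le_iff₀ h1t]
    nlinarith [sq_nonneg t]
  rw [abs_sub_le_iff]
  constructor
  · linarith
  · linarith

lemma core_bound (x : ℝ) (hx : |x| ≤ 1/2) :
    |(1+x) * Real.log (1+x) - x - x^2/2| ≤ 2 * |x|^3 := by
  set f : ℝ → ℝ := fun u => (1+u)*Real.log (1+u) - u - u^2/2 with hf
  have habs := abs_le.mp hx
  have hderiv : ∀ t ∈ Set.uIcc (0:ℝ) x,
      HasDerivWithinAt f (Real.log (1+t) - t) (Set.uIcc 0 x) t := by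
    intro t htmem
    have ht : t ∈ Set.uIcc (0:ℝ) x := htmem
    have ht' : -(1:ℝ)/2 ≤ t ∧ t ≤ 1/2 := by
      rcases Set.mem_uIcc.mp ht with h | h
      · constructor <;> nlinarith [h.1, h.2, habs.1, habs.2]
      · constructor <;> nlinarith [h.1, h.2, habs.1, habs.2]
    have h1t : (0:ℝ) < 1 + t := by linarith [ht'.1]
    have hd : HasDerivAt f (Real.log (1+t) - t) t := by
      have h1 : HasDerivAt (fun u : ℝ => 1 + u) 1 t := by
        simpa using (hasDerivAt_id t).const_add 1
      have h2 : HasDerivAt (fun u : ℝ => Real.log (1+u)) (1/(1+t)) t := by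
        simpa [Function.comp_def] using (Real.hasDerivAt_log h1t.ne').comp t h1
      have h3 := h1.mul h2
      have h4 : HasDerivAt (fun u : ℝ => (1+u)*Real.log (1+u))
          (Real.log (1+t) + 1) t := by
        rw [show Real.log (1+t) + 1 = 1 * Real.log (1 + t) + (1 + t) * (1 / (1 + t)) by
          rw [one_mul, mul_one_div_cancel h1t.ne']]
        exact h3
      have h5 : HasDerivAt (fun u : ℝ => u^2/2) t t := by
        simpa using (hasDerivAt_pow 2 t).div_const 2
      have := (h4.sub (hasDerivAt_id t)).sub h5
      simpa [hf, Pi.sub_def] using this.congr_deriv (by ring)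
    exact hd.hasDerivWithinAt
  have hbound : ∀ t ∈ Set.uIcc (0:ℝ) x, ‖Real.log (1+t) - t‖ ≤ 2 * x^2 := by
    intro t ht
    have ht' : -(1:ℝ)/2 ≤ t ∧ t^2 ≤ x^2 := by
      rcases Set.mem_uIcc.mp ht with h | h
      · constructor
        · nlinarith [habs.1, habs.2, h.1]
        · nlinarith [h.1, h.2]
      · constructor
        · nlinarith [habs.1, habs.2, h.1]
        · nlinarith [h.1, h.2]
    calc ‖Real.log (1+t) - t‖ ≤ 2 * t^2 := log_lin_bound t ht'.1
    _ ≤ 2 * x^2 := by linarith [ht'.2]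
  have := Convex.norm_image_sub_le_of_norm_hasDerivWithin_le hderiv hbound
    (convex_uIcc 0 x) Set.left_mem_uIcc Set.right_mem_uIcc
  have hf0 : f 0 = 0 := by simp [hf]
  rw [hf0, sub_zero, sub_zero] at this
  have hx2 : x^2 = |x|^2 := (sq_abs x).symm
  calc |(1+x) * Real.log (1+x) - x - x^2/2| = ‖f x‖ := by rw [Real.norm_eq_abs]
    _ ≤ 2 * x^2 * ‖x‖ := this
    _ = 2 * |x|^3 := by rw [hx2, Real.norm_eq_abs]; ring


lemma term_bound (a t : ℝ) (ha : 0 < a) (ht : |t| ≤ a/2) :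
    |(a+t) * Real.log ((a+t)/a) - t - t^2/(2*a)| ≤ 2 * |t|^3 / a^2 := by
  have hx : |t/a| ≤ 1/2 := by
    rw [abs_div, abs_of_pos ha, div_le_iff₀ ha]
    linarith
  have hcore : |(1+t/a) * Real.log (1+t/a) - t/a - (t/a)^2/2| ≤ 2*|t/a|^3 := by
    exact core_bound (t/a) hx
  have h1 : (a+t)/a = 1 + t/a := by field_simp
  have key : (a+t) * Real.log ((a+t)/a) - t - t^2/(2*a)
      = a * ((1+t/a) * Real.log (1+t/a) - t/a - (t/a)^2/2) := by
    rw [h1]; field_simp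
  rw [key, abs_mul, abs_of_pos ha]
  have h2 : |t/a|^3 = |t|^3/a^3 := by
    rw [abs_div, abs_of_pos ha, div_pow]
  calc a * |(1+t/a) * Real.log (1+t/a) - t/a - (t/a)^2/2|
      ≤ a * (2*|t/a|^3) := by
        exact mul_le_mul_of_nonneg_left hcore ha.le
    _ = 2 * |t|^3 / a^2 := by
        rw [h2]; field_simp



lemma main_calc (px py ε M : ℝ) (hpx0 : 0 < px) (hpx1 : px < 1)
    (hpy0 : 0 < py) (hpy1 : py < 1)
    (hM : M = min (min ((1-px)*(1-py)) ((1-px)*py)) (min (px*(1-py)) (px*py)))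
    (hsmall : |ε| ≤ M/2) :
    |((((1-px)*(1-py)+ε) * Real.log (((1-px)*(1-py)+ε)/((1-px)*(1-py)))
      + ((1-px)*py-ε) * Real.log (((1-px)*py-ε)/((1-px)*py)))
      + ((px*(1-py)-ε) * Real.log ((px*(1-py)-ε)/(px*(1-py)))
      + (px*py+ε) * Real.log ((px*py+ε)/(px*py))))
      - ε^2/(2*(px-px^2)*(py-py^2))| ≤ 16/M^2 * |ε|^3 := by
  set a00 := (1-px)*(1-py) with ha00
  set a01 := (1-px)*py with ha01
  set a10 := px*(1-py) with ha10
  set a11 := px*py with ha11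
  have h00 : 0 < a00 := by rw [ha00]; nlinarith
  have h01 : 0 < a01 := by rw [ha01]; nlinarith
  have h10 : 0 < a10 := by rw [ha10]; nlinarith
  have h11 : 0 < a11 := by rw [ha11]; nlinarith
  have hM00 : M ≤ a00 := by rw [hM]; exact le_trans (min_le_left _ _) (min_le_left _ _)
  have hM01 : M ≤ a01 := by rw [hM]; exact le_trans (min_le_left _ _) (min_le_right _ _)
  have hM10 : M ≤ a10 := by rw [hM]; exact le_trans (min_le_right _ _) (min_le_left _ _)
  have hM11 : M ≤ a11 := by rw [hM]; exact le_trans (min_le_right _ _) (min_le_right _ _)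
  have hMpos : 0 < M := by rw [hM]; simp [lt_min_iff]; refine ⟨⟨h00, h01⟩, h10, h11⟩
  have hεn : |(-ε)| = |ε| := abs_neg ε
  have b00 := term_bound a00 ε h00 (le_trans hsmall (by linarith))
  have b01 := term_bound a01 (-ε) h01 (by rw [hεn]; exact le_trans hsmall (by linarith))
  have b10 := term_bound a10 (-ε) h10 (by rw [hεn]; exact le_trans hsmall (by linarith))
  have b11 := term_bound a11 ε h11 (le_trans hsmall (by linarith))
  rw [hεn] at b01 b10
  -- quadratic identity
  have hquad : ε^2/(2*a00) + ε^2/(2*a01) + ε^2/(2*a10) + ε^2/(2*a11)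
      = ε^2/(2*(px-px^2)*(py-py^2)) := by
    rw [ha00, ha01, ha10, ha11]
    have h1 : px - px^2 = px*(1-px) := by ring
    have h2 : py - py^2 = py*(1-py) := by ring
    rw [h1, h2]
    have n1 : px ≠ 0 := ne_of_gt hpx0
    have n2 : py ≠ 0 := ne_of_gt hpy0
    have n3 : (1-px) ≠ 0 := by linarith
    have n4 : (1-py) ≠ 0 := by linarith
    field_simp
    ring
  -- rewrite the sum as sum of remainders
  have hsplit : (((a00+ε) * Real.log ((a00+ε)/a00)
      + (a01+(-ε)) * Real.log ((a01+(-ε))/a01)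
      + ((a10+(-ε)) * Real.log ((a10+(-ε))/a10)
      + (a11+ε) * Real.log ((a11+ε)/a11)))
      - ε^2/(2*(px-px^2)*(py-py^2)))
      = ((a00+ε) * Real.log ((a00+ε)/a00) - ε - ε^2/(2*a00))
      + ((a01+(-ε)) * Real.log ((a01+(-ε))/a01) - (-ε) - (-ε)^2/(2*a01))
      + (((a10+(-ε)) * Real.log ((a10+(-ε))/a10) - (-ε) - (-ε)^2/(2*a10))
      + ((a11+ε) * Real.log ((a11+ε)/a11) - ε - ε^2/(2*a11))) := by
    rw [← hquad]; ring_nf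
  have habs4 : ∀ A B C D : ℝ, |A+B+(C+D)| ≤ |A|+|B|+|C|+|D| := by
    intro A B C D
    calc |A+B+(C+D)| ≤ |A+B| + |C+D| := abs_add_le _ _
      _ ≤ |A|+|B|+|C|+|D| := by linarith [abs_add_le A B, abs_add_le C D]
  have hsub : ∀ x : ℝ, a01 - x = a01 + (-x) := fun x => by ring
  have hsub' : ∀ x : ℝ, a10 - x = a10 + (-x) := fun x => by ring
  rw [hsub, hsub', hsplit]
  have htri := habs4 ((a00+ε) * Real.log ((a00+ε)/a00) - ε - ε^2/(2*a00))
    ((a01+(-ε)) * Real.log ((a01+(-ε))/a01) - (-ε) - (-ε)^2/(2*a01))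
    ((a10+(-ε)) * Real.log ((a10+(-ε))/a10) - (-ε) - (-ε)^2/(2*a10))
    ((a11+ε) * Real.log ((a11+ε)/a11) - ε - ε^2/(2*a11))
  refine le_trans htri ?_
  have hle : ∀ a : ℝ, 0 < a → M ≤ a → 2*|ε|^3/a^2 ≤ 4/M^2 * |ε|^3 := by
    intro a ha hMa
    have h2 : M^2 ≤ a^2 := pow_le_pow_left₀ hMpos.le hMa 2
    have heq : 4/M^2*|ε|^3 = 4*|ε|^3/M^2 := by ring
    rw [heq]
    calc 2*|ε|^3/a^2 ≤ 2*|ε|^3/M^2 := by gcongr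
      _ ≤ 4*|ε|^3/M^2 := by gcongr <;> norm_num
  have c00 := le_trans b00 (hle a00 h00 hM00)
  have c01 := le_trans b01 (hle a01 h01 hM01)
  have c10 := le_trans b10 (hle a10 h10 hM10)
  have c11 := le_trans b11 (hle a11 h11 hM11)
  have : 16/M^2 * |ε|^3 = 4/M^2*|ε|^3 + 4/M^2*|ε|^3 + 4/M^2*|ε|^3 + 4/M^2*|ε|^3 := by ring
  rw [this]
  linarith




/-- Theorem 1 of the paper in precise form. If the covariance
ε = p(1,1) − p_x p_y is small (|ε| ≤ (1/2) min_{i,j} p_X(i) p_Y(j)), then the mutual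
information equals ε²/(2(p_x−p_x²)(p_y−p_y²)) up to an error of at most K|ε|³ with
K = 16 / (min_{i,j} p_X(i) p_Y(j))². -/
theorem mutualInfo_eq_half_sq_corr (p : Fin 2 → Fin 2 → ℝ)
    (hpos : ∀ i j, 0 < p i j) (hsum : ∑ i, ∑ j, p i j = 1)
    (px py : ℝ) (hpx : px = ∑ j, p 1 j) (hpy : py = ∑ i, p i 1)
    (hpx0 : 0 < px) (hpx1 : px < 1) (hpy0 : 0 < py) (hpy1 : py < 1)
    (ε : ℝ) (hε : ε = p 1 1 - px * py)
    (M : ℝ)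
    (hM : M = min (min ((∑ j, p 0 j) * (∑ i, p i 0)) ((∑ j, p 0 j) * py))
      (min (px * (∑ i, p i 0)) (px * py)))
    (hsmall : |ε| ≤ M / 2) :
    |(∑ i, ∑ j, p i j * Real.log (p i j / ((∑ j', p i j') * (∑ i', p i' j)))) -
        ε ^ 2 / (2 * (px - px ^ 2) * (py - py ^ 2))| ≤ (16 / M ^ 2) * |ε| ^ 3 := by
  simp only [Fin.sum_univ_two] at hsum hpx hpy hM ⊢
  have hq0 : p 0 0 + p 0 1 = 1 - px := by linarith
  have hr0 : p 0 0 + p 1 0 = 1 - py := by linarith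
  have hp11 : p 1 1 = px*py + ε := by linarith
  have hp10 : p 1 0 = px*(1-py) - ε := by
    have h : px*(1-py) = px - px*py := by ring
    linarith
  have hp01 : p 0 1 = (1-px)*py - ε := by
    have h : (1-px)*py = py - px*py := by ring
    linarith
  have hp00 : p 0 0 = (1-px)*(1-py) + ε := by
    have h : (1-px)*(1-py) = 1 - px - py + px*py := by ring
    linarith
  rw [hq0, hr0] at hM
  rw [hq0, hr0, ← hpx, ← hpy, hp00, hp01, hp10, hp11] at *
  have key := main_calc px py ε M hpx0 hpx1 hpy0 hpy1 hM hsmall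
  convert key using 4 <;> ring
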